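/- Fix x > ε > 0. Then e^{-kx} · Σ_{j ≥ εk} (kx)^j/j! → 1 as k → ∞. Fix 0 < x < ε. Then e^{-kx} · Σ_{j ≥ εk} (kx)^j/j! → 0 as k → ∞. -/

import Mathlib

open Filter

private lemma exp_tsum' (y : ℝ) : ∑' n : ℕ, y ^ n / (n.factorial : ℝ) = Real.exp y := by
  rw [Real.exp_eq_exp_ℝ, NormedSpace.exp_eq_tsum_div]

private lemma tendsto_exp_lin (c θ : ℝ) (hc : 0 < c) :
    Tendsto (fun k : ℕ => Real.exp (θ - c * k)) atTop (nhds 0) := by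
  apply Real.tendsto_exp_atBot.comp
  apply tendsto_atBot_add_const_left _ θ
  simpa using tendsto_neg_atBot_iff.2
    ((tendsto_const_mul_atTop_of_pos hc).2 tendsto_natCast_atTop_atTop)

/-- The model partial density `e^{-kx} Σ_{j ≥ εk} (kx)^j/j!` tends to `1` as
`k → ∞` when `x > ε > 0`, and tends to `0` when `0 < x < ε`. -/
theorem model_partial_density_limits (x ε : ℝ) :
    (0 < ε → ε < x →
      Tendsto (fun k : ℕ => Real.exp (-(k * x)) *
          ∑' j : {j : ℕ // ε * k ≤ (j : ℝ)}, (k * x) ^ (j : ℕ) / ((j : ℕ).factorial : ℝ))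
        atTop (nhds 1)) ∧
    (0 < x → x < ε →
      Tendsto (fun k : ℕ => Real.exp (-(k * x)) *
          ∑' j : {j : ℕ // ε * k ≤ (j : ℝ)}, (k * x) ^ (j : ℕ) / ((j : ℕ).factorial : ℝ))
        atTop (nhds 0)) := by
  have hsum : ∀ y : ℝ, Summable (fun j : ℕ => y ^ j / (j.factorial : ℝ)) :=
    Real.summable_pow_div_factorial
  constructor
  · -- case ε < x : limit 1
    intro hε hεx
    have hx : 0 < x := hε.trans hεx
    set θ := Real.log (x / ε) with hθdef
    have hr : 1 < x / ε := (one_lt_div hε).2 hεx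
    have hθ : 0 < θ := Real.log_pos hr
    have hlog : θ < x / ε - 1 := by
      rw [hθdef]; exact Real.log_lt_sub_one_of_pos (by positivity) (ne_of_gt hr)
    have hc : 0 < x - ε - ε * θ := by
      have h3 : ε * (x / ε) = x := by field_simp
      nlinarith [hlog, hε]
    have hexpθ : Real.exp (-θ) = ε / x := by
      rw [Real.exp_neg, hθdef, Real.exp_log (by positivity), inv_div]
    have key : ∀ k : ℕ,
        Real.exp (-(k * x)) *
            ∑' j : {j : ℕ // ε * k ≤ (j : ℝ)}, (k * x) ^ (j : ℕ) / ((j : ℕ).factorial : ℝ)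
          = 1 - Real.exp (-(k * x)) *
              ∑ j ∈ Finset.range ⌈ε * (k : ℝ)⌉₊, (k * x) ^ j / (j.factorial : ℝ) := by
      intro k
      have hiff : ∀ j : ℕ, (ε * k ≤ (j : ℝ)) ↔ j ∉ Finset.range ⌈ε * (k : ℝ)⌉₊ := by
        intro j; simp [Finset.mem_range, not_lt, Nat.ceil_le]
      have hEq : (∑' j : {j : ℕ // ε * k ≤ (j : ℝ)}, (k * x) ^ (j : ℕ) / ((j : ℕ).factorial : ℝ))
          = ∑' j : {j : ℕ // j ∉ Finset.range ⌈ε * (k : ℝ)⌉₊},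
              (k * x) ^ (j : ℕ) / ((j : ℕ).factorial : ℝ) := by
        rw [← (Equiv.subtypeEquivRight hiff).tsum_eq
          (fun j : {j : ℕ // j ∉ Finset.range ⌈ε * (k : ℝ)⌉₊} =>
            ((k : ℝ) * x) ^ (j : ℕ) / ((j : ℕ).factorial : ℝ))]
        exact tsum_congr fun a => rfl
      have hdec := Summable.sum_add_tsum_subtype_compl (hsum ((k : ℝ) * x))
        (Finset.range ⌈ε * (k : ℝ)⌉₊)
      rw [exp_tsum'] at hdec
      rw [hEq]
      have h2 : (∑' j : {j : ℕ // j ∉ Finset.range ⌈ε * (k : ℝ)⌉₊},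
            (k * x) ^ (j : ℕ) / ((j : ℕ).factorial : ℝ))
          = Real.exp (k * x)
            - ∑ j ∈ Finset.range ⌈ε * (k : ℝ)⌉₊, (k * x) ^ j / (j.factorial : ℝ) := by
        linarith
      rw [h2, mul_sub, ← Real.exp_add,
        show (-((k : ℝ) * x) + (k : ℝ) * x : ℝ) = 0 by ring, Real.exp_zero]
    have hzero : Tendsto (fun k : ℕ => Real.exp (-(k * x)) *
        ∑ j ∈ Finset.range ⌈ε * (k : ℝ)⌉₊, (k * x) ^ j / (j.factorial : ℝ)) atTop (nhds 0) := by
      apply squeeze_zero (g := fun k : ℕ => Real.exp (θ - (x - ε - ε * θ) * k))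
      · intro k
        exact mul_nonneg (Real.exp_nonneg _) (Finset.sum_nonneg fun j _ =>
          div_nonneg (pow_nonneg (mul_nonneg (Nat.cast_nonneg k) hx.le) _) (Nat.cast_nonneg _))
      · intro k
        have hkx : (0 : ℝ) ≤ k * x := mul_nonneg (Nat.cast_nonneg k) hx.le
        have hA : (k : ℝ) * x * (ε / x) = (k : ℝ) * ε := by field_simp
        have hAnn : (0 : ℝ) ≤ (k : ℝ) * x * (ε / x) :=
          mul_nonneg hkx (div_nonneg hε.le hx.le)
        set m := ⌈ε * (k : ℝ)⌉₊ with hm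
        have step1 : ∑ j ∈ Finset.range m, ((k : ℝ) * x) ^ j / (j.factorial : ℝ)
            ≤ Real.exp (θ * m) * Real.exp ((k : ℝ) * ε) := by
          have t1 : ∀ j ∈ Finset.range m, ((k : ℝ) * x) ^ j / (j.factorial : ℝ)
              ≤ Real.exp (θ * m) * (((k : ℝ) * x * (ε / x)) ^ j / (j.factorial : ℝ)) := by
            intro j hj
            rw [Finset.mem_range] at hj
            have h1 : ((k : ℝ) * x * (ε / x)) ^ j
                = ((k : ℝ) * x) ^ j * Real.exp ((j : ℝ) * (-θ)) := by
              rw [mul_pow, ← hexpθ, ← Real.exp_nat_mul]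
            have h2 : ((k : ℝ) * x) ^ j / (j.factorial : ℝ)
                = Real.exp (θ * j) * (((k : ℝ) * x * (ε / x)) ^ j / (j.factorial : ℝ)) := by
              rw [h1, show Real.exp (θ * (j : ℝ)) *
                  (((k : ℝ) * x) ^ j * Real.exp ((j : ℝ) * (-θ)) / (j.factorial : ℝ))
                  = (Real.exp (θ * (j : ℝ)) * Real.exp ((j : ℝ) * (-θ)))
                    * (((k : ℝ) * x) ^ j / (j.factorial : ℝ)) by ring,
                ← Real.exp_add, show θ * (j : ℝ) + (j : ℝ) * (-θ) = 0 by ring,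
                Real.exp_zero, one_mul]
            rw [h2]
            have hjm : θ * (j : ℝ) ≤ θ * (m : ℝ) := by
              have : (j : ℝ) ≤ (m : ℝ) := by exact_mod_cast hj.le
              nlinarith [hθ.le]
            exact mul_le_mul_of_nonneg_right (Real.exp_le_exp.2 hjm)
              (div_nonneg (pow_nonneg hAnn _) (Nat.cast_nonneg _))
          calc ∑ j ∈ Finset.range m, ((k : ℝ) * x) ^ j / (j.factorial : ℝ)
              ≤ ∑ j ∈ Finset.range m,
                Real.exp (θ * m) * (((k : ℝ) * x * (ε / x)) ^ j / (j.factorial : ℝ)) :=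
                Finset.sum_le_sum t1
            _ = Real.exp (θ * m)
                * ∑ j ∈ Finset.range m, ((k : ℝ) * x * (ε / x)) ^ j / (j.factorial : ℝ) := by
                rw [Finset.mul_sum]
            _ ≤ Real.exp (θ * m) * Real.exp ((k : ℝ) * ε) := by
                apply mul_le_mul_of_nonneg_left _ (Real.exp_nonneg _)
                rw [← hA, ← exp_tsum']
                exact Summable.sum_le_tsum (Finset.range m)
                  (fun j _ => div_nonneg (pow_nonneg hAnn _) (Nat.cast_nonneg _)) (hsum _)
        have hm1 : (m : ℝ) ≤ ε * k + 1 := (Nat.ceil_lt_add_one (by positivity)).le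
        calc Real.exp (-((k : ℝ) * x))
              * ∑ j ∈ Finset.range m, ((k : ℝ) * x) ^ j / (j.factorial : ℝ)
            ≤ Real.exp (-((k : ℝ) * x)) * (Real.exp (θ * m) * Real.exp ((k : ℝ) * ε)) :=
              mul_le_mul_of_nonneg_left step1 (Real.exp_nonneg _)
          _ = Real.exp (-((k : ℝ) * x) + θ * m + (k : ℝ) * ε) := by
              rw [← Real.exp_add, ← Real.exp_add]; ring_nf
          _ ≤ Real.exp (θ - (x - ε - ε * θ) * k) := by
              apply Real.exp_le_exp.2
              nlinarith [hm1, hθ.le]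
      · exact tendsto_exp_lin _ _ hc
    have h1 : Tendsto (fun k : ℕ => 1 - Real.exp (-(k * x)) *
        ∑ j ∈ Finset.range ⌈ε * (k : ℝ)⌉₊, (k * x) ^ j / (j.factorial : ℝ)) atTop (nhds 1) := by
      simpa using tendsto_const_nhds.sub hzero
    exact h1.congr (fun k => (key k).symm)
  · -- case x < ε : limit 0
    intro hx hxε
    have hε : 0 < ε := hx.trans hxε
    set θ := Real.log (ε / x) with hθdef
    have hr : 1 < ε / x := (one_lt_div hx).2 hxε
    have hθ : 0 < θ := Real.log_pos hr
    have hexpθ : Real.exp θ = ε / x := by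
      rw [hθdef]; exact Real.exp_log (by positivity)
    have hc : 0 < x - ε + ε * θ := by
      have hlog : Real.log (x / ε) < x / ε - 1 :=
        Real.log_lt_sub_one_of_pos (by positivity)
          (ne_of_lt ((div_lt_one hε).2 hxε))
      have hlogneg : Real.log (x / ε) = -θ := by
        rw [hθdef, ← Real.log_inv, inv_div]
      have h2 : -θ < x / ε - 1 := hlogneg ▸ hlog
      have h3 : ε * (x / ε) = x := by field_simp
      nlinarith [h2, hε]
    apply squeeze_zero (g := fun k : ℕ => Real.exp (0 - (x - ε + ε * θ) * k))
    · intro k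
      exact mul_nonneg (Real.exp_nonneg _) (tsum_nonneg fun j =>
        div_nonneg (pow_nonneg (mul_nonneg (Nat.cast_nonneg k) hx.le) _) (Nat.cast_nonneg _))
    · intro k
      have hkx : (0 : ℝ) ≤ (k : ℝ) * x := mul_nonneg (Nat.cast_nonneg k) hx.le
      have hA : (k : ℝ) * x * (ε / x) = (k : ℝ) * ε := by field_simp
      have hAnn : (0 : ℝ) ≤ (k : ℝ) * x * (ε / x) :=
        mul_nonneg hkx (div_nonneg hε.le hx.le)
      set g : ℕ → ℝ := fun j =>
        Real.exp (-(θ * (ε * k))) * (((k : ℝ) * x * (ε / x)) ^ j / (j.factorial : ℝ)) with hg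
      have hgsum : Summable g := (hsum _).mul_left _
      have hgnn : ∀ j : ℕ, 0 ≤ g j := fun j =>
        mul_nonneg (Real.exp_nonneg _)
          (div_nonneg (pow_nonneg hAnn _) (Nat.cast_nonneg _))
      have hfg : ∀ j : {j : ℕ // ε * k ≤ (j : ℝ)},
          ((k : ℝ) * x) ^ (j : ℕ) / ((j : ℕ).factorial : ℝ) ≤ g j := by
        rintro ⟨j, hj⟩
        show ((k : ℝ) * x) ^ j / (j.factorial : ℝ) ≤ g j
        have h1 : ((k : ℝ) * x * (ε / x)) ^ j
            = ((k : ℝ) * x) ^ j * Real.exp ((j : ℝ) * θ) := by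
          rw [mul_pow, ← hexpθ, ← Real.exp_nat_mul]
        have h2 : g j = Real.exp ((j : ℝ) * θ - θ * (ε * k))
            * (((k : ℝ) * x) ^ j / (j.factorial : ℝ)) := by
          rw [hg]
          simp only
          rw [h1, show (j : ℝ) * θ - θ * (ε * (k : ℝ))
              = -(θ * (ε * (k : ℝ))) + (j : ℝ) * θ by ring, Real.exp_add]
          ring
        rw [h2]
        apply le_mul_of_one_le_left
          (div_nonneg (pow_nonneg hkx _) (Nat.cast_nonneg _))
        apply Real.one_le_exp
        nlinarith [hj, hθ.le]
      have hsubf : Summable (fun j : {j : ℕ // ε * k ≤ (j : ℝ)} =>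
          ((k : ℝ) * x) ^ (j : ℕ) / ((j : ℕ).factorial : ℝ)) :=
        (hsum ((k : ℝ) * x)).comp_injective Subtype.val_injective
      have hsubg : Summable (fun j : {j : ℕ // ε * k ≤ (j : ℝ)} => g j) :=
        hgsum.comp_injective Subtype.val_injective
      have hchain : (∑' j : {j : ℕ // ε * k ≤ (j : ℝ)},
            ((k : ℝ) * x) ^ (j : ℕ) / ((j : ℕ).factorial : ℝ))
          ≤ Real.exp (-(θ * (ε * k))) * Real.exp ((k : ℝ) * ε) := by
        calc (∑' j : {j : ℕ // ε * k ≤ (j : ℝ)},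
              ((k : ℝ) * x) ^ (j : ℕ) / ((j : ℕ).factorial : ℝ))
            ≤ ∑' j : {j : ℕ // ε * k ≤ (j : ℝ)}, g j := Summable.tsum_le_tsum hfg hsubf hsubg
          _ ≤ ∑' j : ℕ, g j := Summable.tsum_subtype_le g _ hgnn hgsum
          _ = Real.exp (-(θ * (ε * k))) * Real.exp ((k : ℝ) * ε) := by
              rw [hg, tsum_mul_left, hA, exp_tsum']
      calc Real.exp (-((k : ℝ) * x)) * ∑' j : {j : ℕ // ε * k ≤ (j : ℝ)},
            ((k : ℝ) * x) ^ (j : ℕ) / ((j : ℕ).factorial : ℝ)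
          ≤ Real.exp (-((k : ℝ) * x))
            * (Real.exp (-(θ * (ε * k))) * Real.exp ((k : ℝ) * ε)) :=
            mul_le_mul_of_nonneg_left hchain (Real.exp_nonneg _)
        _ = Real.exp (-((k : ℝ) * x) + -(θ * (ε * k)) + (k : ℝ) * ε) := by
            rw [← Real.exp_add, ← Real.exp_add]; ring_nf
        _ ≤ Real.exp (0 - (x - ε + ε * θ) * k) := by
            apply Real.exp_le_exp.2
            nlinarith []
    · exact tendsto_exp_lin _ 0 hc
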